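/- Every graph G satisfies N(K_4^-, G) ≤ (1/2)·C(|E(G)|, 2), where N(K_4^-, G) is the number of induced copies of K_4 minus an edge in G. -/

import Mathlib

/-- The number of induced copies of `F` in `G`: the number of vertex subsets of `G`
whose induced subgraph is isomorphic to `F`. -/
noncomputable def inducedCount {α β : Type*} [Fintype α] [Fintype β]
    (F : SimpleGraph α) (G : SimpleGraph β) : ℕ :=
  Set.ncard {s : Finset β | Nonempty (G.induce (s : Set β) ≃g F)}

/-- The complete graph on `t` vertices minus the edge `{0,1}`. -/
def Kminus (t : ℕ) : SimpleGraph (Fin t) :=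
  SimpleGraph.fromRel (fun a b => 2 ≤ a.val ∨ 2 ≤ b.val)

open Finset

open scoped Classical in
/-- two perfect matchings of an induced `K₄⁻` copy on `s`. -/
noncomputable def mat {V : Type*} [Fintype V] (G : SimpleGraph V) (s : Finset V) (i : Fin 2) :
    Finset (Sym2 V) :=
  if h : Nonempty (G.induce (s : Set V) ≃g Kminus 4) then
    (fun v : Fin 4 → V =>
      if i = 0 then {s(v 0, v 2), s(v 1, v 3)} else {s(v 0, v 3), s(v 1, v 2)})
    (fun k => (h.some.symm k : V))
  else ∅

lemma kminus_adj : ∀ a b : Fin 4, (Kminus 4).Adj a b ↔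
    a ≠ b ∧ ((2 ≤ a.val ∨ 2 ≤ b.val) ∨ (2 ≤ b.val ∨ 2 ≤ a.val)) := by
  intro a b
  simp [Kminus, SimpleGraph.fromRel_adj]

lemma fin2_cases : ∀ k : Fin 2, k = 0 ∨ k = 1 := by decide

open scoped Classical in
lemma mat_spec {V : Type*} [Fintype V] (G : SimpleGraph V) (s : Finset V)
    (h : Nonempty (G.induce (s : Set V) ≃g Kminus 4)) :
    ∃ v : Fin 4 → V, Function.Injective v ∧
      (∀ a b, G.Adj (v a) (v b) ↔ (Kminus 4).Adj a b) ∧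
      mat G s 0 = {s(v 0, v 2), s(v 1, v 3)} ∧
      mat G s 1 = {s(v 0, v 3), s(v 1, v 2)} ∧
      s = Finset.image v Finset.univ := by
  classical
  set e := h.some with he
  refine ⟨fun k => (e.symm k : V), ?_, ?_, ?_, ?_, ?_⟩
  · exact Subtype.val_injective.comp (e.symm.toEquiv.injective)
  · intro a b
    constructor
    · intro hadj
      exact e.symm.map_rel_iff.mp (by simpa using hadj)
    · intro hadj
      have := e.symm.map_rel_iff.mpr hadj
      simpa using this
  · rw [mat, dif_pos h]; rfl
  · rw [mat, dif_pos h]; rfl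
  · have hinj : Function.Injective (fun k => ((e.symm k : V))) :=
      Subtype.val_injective.comp (e.symm.toEquiv.injective)
    have hsub : Finset.image (fun k => ((e.symm k : V))) Finset.univ ⊆ s := by
      intro x hx
      simp only [Finset.mem_image] at hx
      obtain ⟨k, -, rfl⟩ := hx
      exact (e.symm k).2
    have hcard4 : s.card = 4 := by
      have := Fintype.card_congr e.toEquiv
      simpa using this
    have hcardim : (Finset.image (fun k => ((e.symm k : V))) Finset.univ).card = 4 := by
      rw [Finset.card_image_of_injective _ hinj]
      simp
    exact (Finset.eq_of_subset_of_card_le hsub (by omega)).symm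

theorem stmt0 {V : Type*} [Fintype V] (G : SimpleGraph V) :
    (inducedCount (Kminus 4) G : ℝ) ≤ (1 / 2) * (Nat.choose G.edgeSet.ncard 2 : ℝ) := by
  classical
  set S := {s : Finset V | Nonempty (G.induce (s : Set V) ≃g Kminus 4)} with hSdef
  have hS : S.Finite := Set.toFinite _
  have hE : G.edgeSet.Finite := Set.toFinite _
  set E := hE.toFinset with hEdef
  have key : 2 * inducedCount (Kminus 4) G ≤ Nat.choose E.card 2 := by
    have hcount : inducedCount (Kminus 4) G = hS.toFinset.card :=
      Set.ncard_eq_toFinset_card S hS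
    set D := hS.toFinset ×ˢ (Finset.univ : Finset (Fin 2)) with hDdef
    have hDcard : D.card = hS.toFinset.card * 2 := by
      simp [hDdef]
    have hle : D.card ≤ (E.powersetCard 2).card := by
      apply Finset.card_le_card_of_injOn (fun p => mat G p.1 p.2)
      · -- maps to
        rintro ⟨s, i⟩ hp
        simp only [Finset.mem_coe, hDdef, Finset.mem_product, Set.Finite.mem_toFinset] at hp
        have h : Nonempty (G.induce (s : Set V) ≃g Kminus 4) := hp.1
        obtain ⟨v, hvinj, hvadj, hm0, hm1, hsim⟩ := mat_spec G s h
        have hadj02 : G.Adj (v 0) (v 2) := (hvadj 0 2).mpr (by rw [kminus_adj]; decide)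
        have hadj13 : G.Adj (v 1) (v 3) := (hvadj 1 3).mpr (by rw [kminus_adj]; decide)
        have hadj03 : G.Adj (v 0) (v 3) := (hvadj 0 3).mpr (by rw [kminus_adj]; decide)
        have hadj12 : G.Adj (v 1) (v 2) := (hvadj 1 2).mpr (by rw [kminus_adj]; decide)
        dsimp only
        rw [Finset.mem_coe, Finset.mem_powersetCard]
        rcases fin2_cases i with rfl | rfl
        · rw [hm0]
          constructor
          · intro a ha
            simp only [Finset.mem_insert, Finset.mem_singleton] at ha
            rw [hEdef, Set.Finite.mem_toFinset]
            rcases ha with rfl | rfl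
            · exact (SimpleGraph.mem_edgeSet G).mpr hadj02
            · exact (SimpleGraph.mem_edgeSet G).mpr hadj13
          · rw [Finset.card_pair]
            simp [Sym2.eq_iff, hvinj.eq_iff]
        · rw [hm1]
          constructor
          · intro a ha
            simp only [Finset.mem_insert, Finset.mem_singleton] at ha
            rw [hEdef, Set.Finite.mem_toFinset]
            rcases ha with rfl | rfl
            · exact (SimpleGraph.mem_edgeSet G).mpr hadj03
            · exact (SimpleGraph.mem_edgeSet G).mpr hadj12
          · rw [Finset.card_pair]
            simp [Sym2.eq_iff, hvinj.eq_iff]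
      · -- injective
        rintro ⟨s, i⟩ hp ⟨t, j⟩ hq heq
        rw [Finset.mem_coe] at hp hq
        simp only [hDdef, Finset.mem_product, Set.Finite.mem_toFinset] at hp hq
        have hs : Nonempty (G.induce (s : Set V) ≃g Kminus 4) := hp.1
        have ht : Nonempty (G.induce (t : Set V) ≃g Kminus 4) := hq.1
        obtain ⟨v, hvinj, hvadj, hm0, hm1, hsim⟩ := mat_spec G s hs
        obtain ⟨w, hwinj, hwadj, hn0, hn1, htim⟩ := mat_spec G t ht
        dsimp only at heq
        have hsupp : ∀ (u : Finset V) (x : Fin 4 → V) (k : Fin 2),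
            mat G u 0 = {s(x 0, x 2), s(x 1, x 3)} →
            mat G u 1 = {s(x 0, x 3), s(x 1, x 2)} →
            u = Finset.image x Finset.univ →
            ∀ y, (∃ a ∈ mat G u k, y ∈ a) ↔ y ∈ u := by
          intro u x k h0 h1 him y
          rcases fin2_cases k with rfl | rfl
          · rw [h0, him]
            simp only [Finset.mem_insert, Finset.mem_singleton, Finset.mem_image,
              Finset.mem_univ, true_and]
            constructor
            · rintro ⟨a, (rfl | rfl), hy⟩ <;> rw [Sym2.mem_iff] at hy <;>
                rcases hy with rfl | rfl
              exacts [⟨0, rfl⟩, ⟨2, rfl⟩, ⟨1, rfl⟩, ⟨3, rfl⟩]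
            · rintro ⟨k, rfl⟩
              fin_cases k
              · exact ⟨s(x 0, x 2), Or.inl rfl, by simp⟩
              · exact ⟨s(x 1, x 3), Or.inr rfl, by simp⟩
              · exact ⟨s(x 0, x 2), Or.inl rfl, by simp⟩
              · exact ⟨s(x 1, x 3), Or.inr rfl, by simp⟩
          · rw [h1, him]
            simp only [Finset.mem_insert, Finset.mem_singleton, Finset.mem_image,
              Finset.mem_univ, true_and]
            constructor
            · rintro ⟨a, (rfl | rfl), hy⟩ <;> rw [Sym2.mem_iff] at hy <;>
                rcases hy with rfl | rfl
              exacts [⟨0, rfl⟩, ⟨3, rfl⟩, ⟨1, rfl⟩, ⟨2, rfl⟩]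
            · rintro ⟨k, rfl⟩
              fin_cases k
              · exact ⟨s(x 0, x 3), Or.inl rfl, by simp⟩
              · exact ⟨s(x 1, x 2), Or.inr rfl, by simp⟩
              · exact ⟨s(x 1, x 2), Or.inr rfl, by simp⟩
              · exact ⟨s(x 0, x 3), Or.inl rfl, by simp⟩
        have hst : s = t := by
          ext y
          rw [← hsupp s v i hm0 hm1 hsim y, ← hsupp t w j hn0 hn1 htim y, heq]
        subst hst
        have hij : i = j := by
          by_contra hij
          have h01 : mat G s 0 = mat G s 1 := by
            rcases fin2_cases i with rfl | rfl <;> rcases fin2_cases j with rfl | rfl <;>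
              simp_all
          rw [hm0, hm1] at h01
          have : s(v 0, v 2) ∈ ({s(v 0, v 3), s(v 1, v 2)} : Finset (Sym2 V)) := by
            rw [← h01]; simp
          simp only [Finset.mem_insert, Finset.mem_singleton, Sym2.eq_iff,
            hvinj.eq_iff] at this
          rcases this with (⟨_, h⟩ | ⟨h, _⟩) | (⟨h, _⟩ | ⟨_, h⟩) <;> exact absurd h (by decide)
        rw [hij]
    rw [Finset.card_powersetCard] at hle
    omega
  have hm : E.card = G.edgeSet.ncard := (Set.ncard_eq_toFinset_card _ hE).symm
  rw [← hm]
  have hcast : ((2 * inducedCount (Kminus 4) G : ℕ) : ℝ) ≤ ((Nat.choose E.card 2 : ℕ) : ℝ) :=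
    Nat.cast_le.mpr key
  push_cast at hcast
  linarith
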